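/- arXiv:2103.02314 — 4 statements merged into one kernel-verified Lean document; each statement's English description precedes it below -/
import Mathlib

section
/- Let K ⊆ ℝ^{n+1} be a closed convex set and Σ = {x : x_{n+1} = 0} a hyperplane. If K is contained in the R-neighborhood D(Σ, R) of Σ for some R ≥ 0, and Σ ⊆ K, then K = Σ × I for some closed interval I ⊆ [-R, R]. -/
/-- A closed convex set `K ⊆ ℝⁿ × ℝ` contained in the `R`-neighborhood of the
hyperplane `Σ = ℝⁿ × {0}` and containing `Σ` is of the form `Σ × I` for a closed
interval `I ⊆ [-R, R]`. -/
theorem slab_convex_splitting {n : ℕ} (R : ℝ) (hR : 0 ≤ R)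
    (K : Set ((EuclideanSpace ℝ (Fin n)) × ℝ))
    (hclosed : IsClosed K) (hconv : Convex ℝ K)
    (hsub : K ⊆ {p | |p.2| ≤ R})
    (hSigma : {p : (EuclideanSpace ℝ (Fin n)) × ℝ | p.2 = 0} ⊆ K) :
    K = Set.univ ×ˢ {t : ℝ | ((0 : EuclideanSpace ℝ (Fin n)), t) ∈ K} ∧
      IsClosed {t : ℝ | ((0 : EuclideanSpace ℝ (Fin n)), t) ∈ K} ∧
      ({t : ℝ | ((0 : EuclideanSpace ℝ (Fin n)), t) ∈ K}).OrdConnected ∧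
      {t : ℝ | ((0 : EuclideanSpace ℝ (Fin n)), t) ∈ K} ⊆ Set.Icc (-R) R := by
  -- Key: if (x, t) ∈ K then (y, t) ∈ K for any y.
  have key : ∀ (x : EuclideanSpace ℝ (Fin n)) (t : ℝ), (x, t) ∈ K →
      ∀ y : EuclideanSpace ℝ (Fin n), (y, t) ∈ K := by
    intro x t hx y
    have step : ∀ θ : ℝ, 0 ≤ θ → θ < 1 → (y, θ * t) ∈ K := by
      intro θ hθ0 hθ1
      have h1θ : (0:ℝ) < 1 - θ := by linarith
      have hz : (((1 - θ)⁻¹ • (y - θ • x) : EuclideanSpace ℝ (Fin n)), (0:ℝ)) ∈ K :=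
        hSigma rfl
      have hcomb := hconv hz hx (le_of_lt h1θ) hθ0 (by ring)
      have heq : (1 - θ) • (((1 - θ)⁻¹ • (y - θ • x) : EuclideanSpace ℝ (Fin n)), (0:ℝ))
          + θ • ((x, t) : (EuclideanSpace ℝ (Fin n)) × ℝ) = (y, θ * t) := by
        rw [Prod.smul_mk, Prod.smul_mk, Prod.mk_add_mk, Prod.mk.injEq]
        refine ⟨?_, ?_⟩
        · rw [smul_smul, mul_inv_cancel₀ (ne_of_gt h1θ), one_smul]
          abel
        · simp
      rwa [heq] at hcomb
    -- take the limit θ → 1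
    have htend : Filter.Tendsto (fun m : ℕ => ((y, (1 - (1:ℝ)/(m+1)) * t) :
        (EuclideanSpace ℝ (Fin n)) × ℝ)) Filter.atTop (nhds (y, t)) := by
      have h1 : Filter.Tendsto (fun m : ℕ => (1 - (1:ℝ)/(m+1)) * t) Filter.atTop
          (nhds t) := by
        have : Filter.Tendsto (fun m : ℕ => (1:ℝ)/((m:ℝ)+1)) Filter.atTop (nhds 0) :=
          tendsto_one_div_add_atTop_nhds_zero_nat
        have h2 : Filter.Tendsto (fun m : ℕ => (1 - (1:ℝ)/(m+1))) Filter.atTop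
            (nhds 1) := by
          have := Filter.Tendsto.const_sub (1:ℝ) this
          simpa using this
        simpa using h2.mul_const t
      exact Filter.Tendsto.prodMk_nhds tendsto_const_nhds h1
    refine hclosed.mem_of_tendsto htend (Filter.Eventually.of_forall fun m => ?_)
    refine step _ ?_ ?_
    · have : (1:ℝ)/(m+1) ≤ 1 := by
        rw [div_le_one (by positivity)]; linarith
      linarith
    · have : (0:ℝ) < 1/(m+1) := by positivity
      linarith
  refine ⟨?_, ?_, ?_, ?_⟩
  · ext ⟨x, t⟩
    simp only [Set.mem_prod, Set.mem_univ, true_and, Set.mem_setOf_eq]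
    exact ⟨fun h => key x t h 0, fun h => key 0 t h x⟩
  · exact hclosed.preimage (Continuous.prodMk_right (0 : EuclideanSpace ℝ (Fin n)))
  · refine Convex.ordConnected ?_
    intro t1 h1 t2 h2 a b ha hb hab
    have := hconv h1 h2 ha hb hab
    simpa [Prod.smul_mk, Prod.mk_add_mk, smul_eq_mul] using this
  · intro t ht
    have := hsub ht
    simp only [Set.mem_setOf_eq] at this
    exact abs_le.mp this
end

section
/- Let Ω ⊆ ℝ^{n+1} be a convex open set containing the closed ball B(p, r), and let x ∈ ∂Ω with ν the outward unit normal to Ω at x (i.e., Ω ⊆ {y : (y − x)·ν ≤ 0}). Then ν · (x − p)/|x − p| ≥ r/√(r² + |x − p|²). -/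
/-- If an open convex set `Ω ⊆ ℝ^{n+1}` contains the closed ball `B(p,r)` and
`ν` is an outward unit normal to `Ω` at a boundary point `x ≠ p`, then
`⟪ν, (x-p)/|x-p|⟫ ≥ r / √(r² + |x-p|²)`. -/
theorem outward_normal_radial_bound {n : ℕ}
    (Ω : Set (EuclideanSpace ℝ (Fin (n + 1)))) (hopen : IsOpen Ω) (hconv : Convex ℝ Ω)
    (p : EuclideanSpace ℝ (Fin (n + 1))) (r : ℝ) (hr : 0 < r)
    (hball : Metric.closedBall p r ⊆ Ω)
    (x : EuclideanSpace ℝ (Fin (n + 1))) (hx : x ∈ frontier Ω) (hxp : x ≠ p)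
    (ν : EuclideanSpace ℝ (Fin (n + 1))) (hν : ‖ν‖ = 1)
    (hsupport : ∀ y ∈ Ω, (inner ℝ (y - x) ν : ℝ) ≤ 0) :
    r / Real.sqrt (r ^ 2 + ‖x - p‖ ^ 2) ≤ (inner ℝ ν (x - p) : ℝ) / ‖x - p‖ := by
  have hd : (0:ℝ) < ‖x - p‖ := by
    simpa [sub_eq_zero] using (norm_pos_iff.2 (sub_ne_zero.2 hxp))
  have hy : p + r • ν ∈ Ω := by
    apply hball
    simp [Metric.mem_closedBall, dist_eq_norm, norm_smul, hν, abs_of_pos hr]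
  have hkey : r ≤ (inner ℝ ν (x - p) : ℝ) := by
    have h := hsupport _ hy
    have hexp : (inner ℝ (p + r • ν - x) ν : ℝ)
        = r * (inner ℝ ν ν : ℝ) - inner ℝ ν (x - p) := by
      rw [show p + r • ν - x = r • ν - (x - p) by abel]
      rw [inner_sub_left, real_inner_smul_left, real_inner_comm (x - p) ν]
    have hνν : (inner ℝ ν ν : ℝ) = 1 := by
      rw [real_inner_self_eq_norm_sq, hν]; norm_num
    rw [hexp, hνν] at h
    linarith
  have hnn : (0:ℝ) ≤ r ^ 2 + ‖x - p‖ ^ 2 := by positivity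
  have hsq : ‖x - p‖ ≤ Real.sqrt (r ^ 2 + ‖x - p‖ ^ 2) := by
    nlinarith [Real.sq_sqrt hnn, Real.sqrt_nonneg (r ^ 2 + ‖x - p‖ ^ 2), hd]
  calc r / Real.sqrt (r ^ 2 + ‖x - p‖ ^ 2) ≤ r / ‖x - p‖ :=
        div_le_div_of_nonneg_left hr.le hd hsq
    _ ≤ (inner ℝ ν (x - p) : ℝ) / ‖x - p‖ := by gcongr
end

section
/- Let Ω ⊆ ℝ^{n+1} be open convex with B(p, r) ⊆ Ω, let L > 1, and let x ∈ ∂Ω with |x − p| ≤ 2Lr. Then any outward unit normal ν at x satisfies ν · (x − p)/|x − p| ≥ 1/√(1 + 4L²). -/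
/-- If an open convex set `Ω ⊆ ℝ^{n+1}` contains the closed ball `B(p,r)`,
`L > 1`, and `x` is a boundary point with `|x-p| ≤ 2Lr`, then any outward unit normal
`ν` at `x` satisfies `⟪ν, (x-p)/|x-p|⟫ ≥ 1/√(1 + 4L²)`. -/
theorem outward_normal_angle_bound {n : ℕ}
    (Ω : Set (EuclideanSpace ℝ (Fin (n + 1)))) (hopen : IsOpen Ω) (hconv : Convex ℝ Ω)
    (p : EuclideanSpace ℝ (Fin (n + 1))) (r L : ℝ) (hr : 0 < r) (hL : 1 < L)
    (hball : Metric.closedBall p r ⊆ Ω)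
    (x : EuclideanSpace ℝ (Fin (n + 1))) (hx : x ∈ frontier Ω) (hxp : x ≠ p)
    (hdist : ‖x - p‖ ≤ 2 * L * r)
    (ν : EuclideanSpace ℝ (Fin (n + 1))) (hν : ‖ν‖ = 1)
    (hsupport : ∀ y ∈ Ω, (inner ℝ (y - x) ν : ℝ) ≤ 0) :
    1 / Real.sqrt (1 + 4 * L ^ 2) ≤ (inner ℝ ν (x - p) : ℝ) / ‖x - p‖ := by
  have hL0 : (0:ℝ) < L := lt_trans one_pos hL
  have hy : p + r • ν ∈ Ω := by
    apply hball
    simp [Metric.mem_closedBall, dist_eq_norm, norm_smul, hν, abs_of_pos hr]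
  have hkey := hsupport _ hy
  have hinner : (r:ℝ) ≤ inner ℝ ν (x - p) := by
    have : (inner ℝ (p + r • ν - x) ν : ℝ) = inner ℝ (p - x) ν + r * (‖ν‖:ℝ)^2 := by
      rw [show p + r • ν - x = (p - x) + r • ν by abel, inner_add_left, inner_smul_left,
        real_inner_self_eq_norm_sq]
      norm_num
    rw [this, hν] at hkey
    have : (inner ℝ (p - x) ν : ℝ) = - inner ℝ ν (x - p) := by
      rw [real_inner_comm, ← inner_neg_right, neg_sub]
    linarith [hkey, this ▸ hkey]
  have hs : Real.sqrt (1 + 4 * L ^ 2) ≥ 2 * L := by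
    rw [show (2*L) = Real.sqrt ((2*L)^2) from (Real.sqrt_sq (by positivity)).symm]
    apply Real.sqrt_le_sqrt; nlinarith
  have hnorm_pos : (0:ℝ) < ‖x - p‖ := by
    rw [norm_pos_iff]; exact sub_ne_zero.mpr hxp
  have hs0 : (0:ℝ) < Real.sqrt (1 + 4 * L ^ 2) := by positivity
  have h1 : ‖x - p‖ ≤ Real.sqrt (1 + 4 * L ^ 2) * r := by nlinarith
  calc 1 / Real.sqrt (1 + 4 * L ^ 2) = r / (Real.sqrt (1 + 4 * L ^ 2) * r) := by
        field_simp
    _ ≤ (inner ℝ ν (x - p) : ℝ) / ‖x - p‖ := div_le_div₀ (le_trans hr.le hinner) hinner hnorm_pos h1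
end

section
/- Let γ be positive, homogeneous of degree one, and monotone increasing in each argument on a cone Γ containing (0,…,0,1,…,1) (with m zeros). For the translating paraboloid barrier with c = γ(0,…,0,1,…,1)⁻¹, at each point the normal speed of translation satisfies |∂_t F · ν| = 1/√(1 + c²|x'|²) ≤ γ(λ), where λ are the principal curvatures listed in the previous lemma. -/
/-- Translating paraboloid barrier speed bound.  Let `γ` be positive,
one-homogeneous and monotone on a cone `Γ` containing the cylindrical point
`e_m = (0,…,0,1,…,1)` (with `m` zeros), and set `c := γ(e_m)⁻¹`.  At a point of the
barrier with `s = c²|x'|²`, the principal curvature vector is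
`λ = (c/√(1+s))·(0,…,0, 1 − s/(1+s), 1,…,1)` (with `m-1` zeros); if `λ ∈ Γ` then the
normal translation speed `1/√(1+s)` does not exceed `γ(λ)`. -/
theorem barrier_speed_bound {n m : ℕ} (hm : 1 ≤ m) (hmn : m ≤ n - 1)
    (Γ : Set (Fin n → ℝ))
    (hcone : ∀ (a : ℝ), 0 < a → ∀ l ∈ Γ, a • l ∈ Γ)
    (γ : (Fin n → ℝ) → ℝ)
    (hpos : ∀ l ∈ Γ, 0 < γ l)
    (hhom : ∀ (a : ℝ), 0 < a → ∀ l ∈ Γ, γ (a • l) = a * γ l)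
    (hmono : ∀ l ∈ Γ, ∀ l' ∈ Γ, (∀ i, l i ≤ l' i) → γ l ≤ γ l')
    (em : Fin n → ℝ) (hem : ∀ i : Fin n, em i = if (i : ℕ) < m then 0 else 1)
    (hemΓ : em ∈ Γ)
    (c : ℝ) (hcdef : c = (γ em)⁻¹)
    (s : ℝ) (hs : 0 ≤ s)
    (lam : Fin n → ℝ)
    (hlam : ∀ i : Fin n, lam i = c / Real.sqrt (1 + s) *
      (if (i : ℕ) < m - 1 then 0 else if (i : ℕ) = m - 1 then 1 - s / (1 + s) else 1))
    (hlamΓ : lam ∈ Γ) :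
    1 / Real.sqrt (1 + s) ≤ γ lam := by

  have hγem := hpos em hemΓ
  have hc : 0 < c := by rw [hcdef]; positivity
  have hsq : 0 < Real.sqrt (1 + s) := Real.sqrt_pos.mpr (by linarith)
  set a := c / Real.sqrt (1 + s) with ha
  have hapos : 0 < a := div_pos hc hsq
  have hmem : a • em ∈ Γ := hcone a hapos em hemΓ
  have hfrac : 0 ≤ 1 - s / (1 + s) := by
    have : s / (1 + s) ≤ 1 := div_le_one_of_le₀ (by linarith) (by linarith)
    linarith
  have hle : ∀ i, (a • em) i ≤ lam i := by
    intro i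
    simp only [Pi.smul_apply, smul_eq_mul, hem i, hlam i]
    by_cases h : (i : ℕ) < m
    · by_cases h2 : (i : ℕ) < m - 1
      · simp [h, h2]
      · have h3 : (i : ℕ) = m - 1 := by omega
        have := mul_nonneg hapos.le hfrac
        have hlt : m - 1 < m := Nat.sub_lt hm one_pos
        rw [h3, if_pos hlt, if_neg (lt_irrefl (m-1)), if_pos rfl, mul_zero]
        linarith
    · have h2 : ¬ (i : ℕ) < m - 1 := by omega
      have h3 : (i : ℕ) ≠ m - 1 := by omega
      simp [h, h2, h3]
  have key := hmono _ hmem _ hlamΓ hle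
  rw [hhom a hapos em hemΓ] at key
  have heq : a * γ em = 1 / Real.sqrt (1 + s) := by
    rw [ha, hcdef]
    field_simp
  linarith
end
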